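/- Let a > b > 0 and c, δ > 0. For each n, let Ẑ_1^n, …, Ẑ_n^n be independent with √n·Ẑ_j^n ∼ Geometric on ℕ_0 with success probability 1 − ρ_j^{(n)} (ρ_j^{(n)} as in the Jackson stationary distribution with parameters a,b), and set X̂_i^n = Σ_{j=1}^i Ẑ_j^n. Then limsup_{N→∞} limsup_{n→∞} P( Σ_{i=N}^n exp(−c·X̂_i^n) > δ ) = 0. -/

import Mathlib

open Filter Finset MeasureTheory
open scoped ENNReal Topology

/-- Traffic intensities of the Jackson network representing the gaps of the
`n`-server marginal-JSQ system with pauses. -/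
noncomputable def jacksonRho (a b : ℝ) (n i : ℕ) : ℝ :=
  if i = 1 then
    (1 - a / (n : ℝ) ^ ((3 : ℝ) / 2) + b / Real.sqrt n)
      * (1 - a / (n : ℝ) ^ ((3 : ℝ) / 2)) ^ (n - 1)
  else (1 - a / (n : ℝ) ^ ((3 : ℝ) / 2)) ^ (n - i + 1)

section Aux

variable {Ω : Type*} [MeasurableSpace Ω]

lemma aux_measSet (Z : ℕ → Ω → ℝ) (hm : ∀ j, Measurable (Z j))
    (S T : Finset ℕ) (v w : ℕ → ℝ) :
    MeasurableSet {ω | (∀ j ∈ S, Z j ω = v j) ∧ (∀ j ∈ T, w j ≤ Z j ω)} := by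
  have h1 : {ω | (∀ j ∈ S, Z j ω = v j) ∧ (∀ j ∈ T, w j ≤ Z j ω)} =
      (⋂ j ∈ (S : Set ℕ), (Z j) ⁻¹' {v j}) ∩
        ⋂ j ∈ (T : Set ℕ), (Z j) ⁻¹' (Set.Ici (w j)) := by
    ext ω
    simp [Set.mem_iInter, Set.mem_setOf_eq]
  rw [h1]
  exact (MeasurableSet.biInter S.countable_toSet
      fun j _ => (hm j) (measurableSet_singleton _)).inter
    (MeasurableSet.biInter T.countable_toSet fun j _ => (hm j) measurableSet_Ici)

lemma aux_A (μ : Measure Ω) [IsProbabilityMeasure μ]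
    (Z : ℕ → Ω → ℝ) (ρ : ℕ → ℝ) (n : ℕ) (hn : 1 ≤ n)
    (hm : ∀ j, Measurable (Z j))
    (hlat : ∀ j ω, ∃ m : ℕ, Z j ω = (m : ℝ) / Real.sqrt n)
    (htail : ∀ m : ℕ → ℕ,
      μ {ω | ∀ j ∈ Icc 1 n, (m j : ℝ) / Real.sqrt n ≤ Z j ω}
        = ∏ j ∈ Icc 1 n, ENNReal.ofReal (ρ j ^ m j))
    (S : Finset ℕ) :
    ∀ T : Finset ℕ, Disjoint S T → S ⊆ Icc 2 n → T ⊆ Icc 2 n → ∀ w : ℕ → ℕ,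
      μ {ω | (∀ j ∈ S, Z j ω = (w j : ℝ) / Real.sqrt n) ∧
             (∀ j ∈ T, (w j : ℝ) / Real.sqrt n ≤ Z j ω)}
        = (∏ j ∈ S, (ENNReal.ofReal (ρ j ^ w j) - ENNReal.ofReal (ρ j ^ (w j + 1)))) *
          ∏ j ∈ T, ENNReal.ofReal (ρ j ^ w j) := by
  have hsq : 0 < Real.sqrt n := Real.sqrt_pos.2 (by exact_mod_cast hn)
  have hZ0 : ∀ j ω, 0 ≤ Z j ω := by
    intro j ω
    obtain ⟨m, hm'⟩ := hlat j ω
    rw [hm']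
    positivity
  induction S using Finset.induction_on with
  | empty =>
    intro T _ _ hT w
    have hTsub : T ⊆ Icc 1 n := hT.trans (Icc_subset_Icc_left (by norm_num))
    have hset : {ω | (∀ j ∈ (∅ : Finset ℕ), Z j ω = (w j : ℝ) / Real.sqrt n) ∧
        (∀ j ∈ T, (w j : ℝ) / Real.sqrt n ≤ Z j ω)}
        = {ω | ∀ j ∈ Icc 1 n,
            (((fun j => if j ∈ T then w j else 0) j : ℕ) : ℝ) / Real.sqrt n ≤ Z j ω} := by
      ext ω
      simp only [Set.mem_setOf_eq, Finset.notMem_empty, false_implies, implies_true, true_and]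
      constructor
      · intro h j hj
        by_cases hjT : j ∈ T
        · simpa [hjT] using h j hjT
        · simp only [hjT, if_false, Nat.cast_zero, zero_div]
          exact hZ0 j ω
      · intro h j hj
        have := h j (hTsub hj)
        simpa [hj] using this
    rw [hset, htail]
    simp only [prod_empty, one_mul]
    calc ∏ j ∈ Icc 1 n, ENNReal.ofReal (ρ j ^ (if j ∈ T then w j else 0))
        = ∏ j ∈ T, ENNReal.ofReal (ρ j ^ (if j ∈ T then w j else 0)) :=
          (Finset.prod_subset hTsub (fun j _ hj => by simp [hj])).symm
      _ = ∏ j ∈ T, ENNReal.ofReal (ρ j ^ w j) :=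
          Finset.prod_congr rfl (fun j hj => by simp [hj])
  | @insert j₀ S hj₀S IH =>
    intro T hdisj hS hT w
    have hj₀T : j₀ ∉ T := fun h =>
      (Finset.disjoint_left.1 hdisj (Finset.mem_insert_self j₀ S)) h
    have hj₀Icc : j₀ ∈ Icc 2 n := hS (Finset.mem_insert_self j₀ S)
    have hSsub : S ⊆ Icc 2 n := fun j hj => hS (Finset.mem_insert_of_mem hj)
    have hdisj' : Disjoint S (insert j₀ T) := by
      rw [Finset.disjoint_insert_right]
      exact ⟨hj₀S, Finset.disjoint_of_subset_left (Finset.subset_insert _ _) hdisj⟩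
    have hT' : insert j₀ T ⊆ Icc 2 n := Finset.insert_subset hj₀Icc hT
    set w' := Function.update w j₀ (w j₀ + 1) with hw'
    have hwS : ∀ j ∈ S, w' j = w j := fun j hj =>
      Function.update_of_ne (by rintro rfl; exact hj₀S hj) _ _
    have hwT : ∀ j ∈ T, w' j = w j := fun j hj =>
      Function.update_of_ne (by rintro rfl; exact hj₀T hj) _ _
    have hwj₀ : w' j₀ = w j₀ + 1 := Function.update_self _ _ _
    set A := {ω | (∀ j ∈ S, Z j ω = (w j : ℝ) / Real.sqrt n) ∧
        (∀ j ∈ insert j₀ T, (w j : ℝ) / Real.sqrt n ≤ Z j ω)} with hA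
    set B := {ω | (∀ j ∈ S, Z j ω = (w' j : ℝ) / Real.sqrt n) ∧
        (∀ j ∈ insert j₀ T, (w' j : ℝ) / Real.sqrt n ≤ Z j ω)} with hB
    have hBA : B ⊆ A := by
      rintro ω ⟨h1, h2⟩
      refine ⟨fun j hj => by rw [← hwS j hj]; exact h1 j hj, fun j hj => ?_⟩
      rcases Finset.mem_insert.1 hj with rfl | hj'
      · refine le_trans ?_ (h2 j (Finset.mem_insert_self _ _))
        rw [hwj₀]
        apply (div_le_div_iff_of_pos_right hsq).2
        push_cast
        linarith
      · rw [← hwT j hj']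
        exact h2 j (Finset.mem_insert_of_mem hj')
    have hset : {ω | (∀ j ∈ insert j₀ S, Z j ω = (w j : ℝ) / Real.sqrt n) ∧
        (∀ j ∈ T, (w j : ℝ) / Real.sqrt n ≤ Z j ω)} = A \ B := by
      ext ω
      simp only [Set.mem_diff, hA, hB, Set.mem_setOf_eq]
      constructor
      · rintro ⟨h1, h2⟩
        have heq0 : Z j₀ ω = (w j₀ : ℝ) / Real.sqrt n := h1 j₀ (Finset.mem_insert_self _ _)
        refine ⟨⟨fun j hj => h1 j (Finset.mem_insert_of_mem hj), fun j hj => ?_⟩, ?_⟩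
        · rcases Finset.mem_insert.1 hj with rfl | hj'
          · exact le_of_eq heq0.symm
          · exact h2 j hj'
        · rintro ⟨hB1, hB2⟩
          have h := hB2 j₀ (Finset.mem_insert_self _ _)
          rw [heq0, hwj₀] at h
          have h' := (div_le_div_iff_of_pos_right hsq).1 h
          push_cast at h'
          linarith
      · rintro ⟨⟨h1, h2⟩, hnB⟩
        have hge : (w j₀ : ℝ) / Real.sqrt n ≤ Z j₀ ω := h2 j₀ (Finset.mem_insert_self _ _)
        have hlt : Z j₀ ω < ((w j₀ : ℝ) + 1) / Real.sqrt n := by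
          by_contra hge'
          push_neg at hge'
          refine hnB ⟨fun j hj => by rw [hwS j hj]; exact h1 j hj, fun j hj => ?_⟩
          rcases Finset.mem_insert.1 hj with rfl | hj'
          · rw [hwj₀]
            push_cast
            exact hge'
          · rw [hwT j hj']
            exact h2 j (Finset.mem_insert_of_mem hj')
        obtain ⟨m, hmω⟩ := hlat j₀ ω
        have h1' : (w j₀ : ℝ) ≤ (m : ℝ) := by
          rw [hmω] at hge
          exact (div_le_div_iff_of_pos_right hsq).1 hge
        have h2' : (m : ℝ) < (w j₀ : ℝ) + 1 := by
          rw [hmω, div_lt_div_iff₀ hsq hsq] at hlt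
          exact lt_of_mul_lt_mul_right hlt hsq.le
        have hmw : m = w j₀ := by
          have hle1 : w j₀ ≤ m := by exact_mod_cast h1'
          have hle2 : m < w j₀ + 1 := by exact_mod_cast h2'
          omega
        refine ⟨fun j hj => ?_, fun j hj => h2 j (Finset.mem_insert_of_mem hj)⟩
        rcases Finset.mem_insert.1 hj with rfl | hj'
        · rw [hmω, hmw]
        · exact h1 j hj'
    have hBmeas : MeasurableSet B := by
      have := aux_measSet Z hm S (insert j₀ T)
        (fun j => (w' j : ℝ) / Real.sqrt n) (fun j => (w' j : ℝ) / Real.sqrt n)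
      exact this
    rw [hset, measure_diff hBA hBmeas.nullMeasurableSet (measure_ne_top μ B)]
    rw [IH (insert j₀ T) hdisj' hSsub hT' w]
    have hμB : μ B = (∏ j ∈ S, (ENNReal.ofReal (ρ j ^ w j) - ENNReal.ofReal (ρ j ^ (w j + 1)))) *
        ∏ j ∈ insert j₀ T, ENNReal.ofReal (ρ j ^ w' j) := by
      rw [IH (insert j₀ T) hdisj' hSsub hT' w']
      congr 1
      refine Finset.prod_congr rfl fun j hj => ?_
      rw [hwS j hj]
    rw [hμB]
    rw [Finset.prod_insert hj₀T, Finset.prod_insert hj₀T, Finset.prod_insert hj₀S, hwj₀]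
    have hQ : ∏ j ∈ T, ENNReal.ofReal (ρ j ^ w' j) = ∏ j ∈ T, ENNReal.ofReal (ρ j ^ w j) :=
      Finset.prod_congr rfl fun j hj => by rw [hwT j hj]
    rw [hQ]
    set o1 := ENNReal.ofReal (ρ j₀ ^ w j₀)
    set o2 := ENNReal.ofReal (ρ j₀ ^ (w j₀ + 1))
    set PS := ∏ j ∈ S, (ENNReal.ofReal (ρ j ^ w j) - ENNReal.ofReal (ρ j ^ (w j + 1)))
    set QT := ∏ j ∈ T, ENNReal.ofReal (ρ j ^ w j)
    have hfin : PS * QT ≠ ⊤ := by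
      apply ENNReal.mul_ne_top
      · refine (ENNReal.prod_lt_top fun j _ => ?_).ne
        exact lt_of_le_of_lt tsub_le_self ENNReal.ofReal_lt_top
      · refine (ENNReal.prod_lt_top fun j _ => ?_).ne
        exact ENNReal.ofReal_lt_top
    symm
    calc (o1 - o2) * PS * QT = (o1 - o2) * (PS * QT) := by ring
      _ = o1 * (PS * QT) - o2 * (PS * QT) := ENNReal.sub_mul (fun _ _ => hfin)
      _ = PS * (o1 * QT) - PS * (o2 * QT) := by rw [mul_left_comm o1, mul_left_comm o2]

lemma aux_geom (r : ℝ) (h0 : 0 ≤ r) (h1 : r < 1) (K : ℕ) :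
    ∑ k ∈ range K, r ^ k ≤ (1 - r)⁻¹ := by
  have hne : r ≠ 1 := ne_of_lt h1
  have hpos : (0:ℝ) < 1 - r := by linarith
  rw [geom_sum_eq hne]
  rw [show (r ^ K - 1) / (r - 1) = (1 - r ^ K) / (1 - r) by
    rw [← neg_div_neg_eq, neg_sub, neg_sub]]
  rw [div_le_iff₀ hpos, inv_mul_cancel₀ (ne_of_gt hpos)]
  linarith [pow_nonneg h0 K]

lemma aux_D (μ : Measure Ω) [IsProbabilityMeasure μ]
    (Z : ℕ → Ω → ℝ) (ρ : ℕ → ℝ) (n : ℕ) (hn : 1 ≤ n)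
    (hm : ∀ j, Measurable (Z j))
    (hlat : ∀ j ω, ∃ m : ℕ, Z j ω = (m : ℝ) / Real.sqrt n)
    (htail : ∀ m : ℕ → ℕ,
      μ {ω | ∀ j ∈ Icc 1 n, (m j : ℝ) / Real.sqrt n ≤ Z j ω}
        = ∏ j ∈ Icc 1 n, ENNReal.ofReal (ρ j ^ m j))
    (hρ : ∀ j ∈ Icc 2 n, 0 ≤ ρ j ∧ ρ j ≤ 1)
    (x : ℝ) (hx0 : 0 < x) (hx1 : x < 1)
    (T : Finset ℕ) :
    ∀ (S : Finset ℕ), Disjoint S T → S ⊆ Icc 2 n → T ⊆ Icc 2 n → ∀ (w : ℕ → ℕ) (m : ℕ),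
      μ {ω | (∀ j ∈ S, Z j ω = (w j : ℝ) / Real.sqrt n) ∧
             ∑ j ∈ T, Z j ω ≤ (m : ℝ) / Real.sqrt n}
        ≤ ENNReal.ofReal ((∏ j ∈ S, (ρ j ^ w j - ρ j ^ (w j + 1))) * (x⁻¹) ^ m *
            ∏ j ∈ T, ((1 - ρ j) / (1 - x * ρ j))) := by
  have hsq : 0 < Real.sqrt n := Real.sqrt_pos.2 (by exact_mod_cast hn)
  have hZ0 : ∀ j ω, 0 ≤ Z j ω := by
    intro j ω
    obtain ⟨m, hm'⟩ := hlat j ω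
    rw [hm']
    positivity
  have hxinv : 1 ≤ x⁻¹ := one_le_inv_iff₀.2 ⟨hx0, hx1.le⟩
  have hden : ∀ j ∈ Icc 2 n, 0 < 1 - x * ρ j := by
    intro j hj
    have h := hρ j hj
    nlinarith
  have hqnn : ∀ j ∈ Icc 2 n, 0 ≤ (1 - ρ j) / (1 - x * ρ j) := by
    intro j hj
    exact div_nonneg (by linarith [(hρ j hj).2]) (hden j hj).le
  induction T using Finset.induction_on with
  | empty =>
    intro S hdisj hS _ w m
    have hSfac : ∀ j ∈ S, 0 ≤ ρ j ^ w j - ρ j ^ (w j + 1) := by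
      intro j hj
      have h := hρ j (hS hj)
      exact sub_nonneg.2 (pow_le_pow_of_le_one h.1 h.2 (Nat.le_succ _))
    have hset : {ω | (∀ j ∈ S, Z j ω = (w j : ℝ) / Real.sqrt n) ∧
        ∑ j ∈ (∅ : Finset ℕ), Z j ω ≤ (m : ℝ) / Real.sqrt n}
        = {ω | (∀ j ∈ S, Z j ω = (w j : ℝ) / Real.sqrt n) ∧
            (∀ j ∈ (∅ : Finset ℕ), (w j : ℝ) / Real.sqrt n ≤ Z j ω)} := by
      ext ω
      simp only [Set.mem_setOf_eq, Finset.sum_empty, Finset.notMem_empty, false_implies,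
        implies_true, and_true]
      exact and_iff_left (by positivity)
    rw [hset, aux_A μ Z ρ n hn hm hlat htail S ∅ (Finset.disjoint_empty_right _) hS
      (Finset.empty_subset _) w]
    simp only [Finset.prod_empty, mul_one]
    have hconv : (∏ j ∈ S, (ENNReal.ofReal (ρ j ^ w j) - ENNReal.ofReal (ρ j ^ (w j + 1))))
        = ENNReal.ofReal (∏ j ∈ S, (ρ j ^ w j - ρ j ^ (w j + 1))) := by
      rw [ENNReal.ofReal_prod_of_nonneg hSfac]
      refine Finset.prod_congr rfl fun j hj => ?_
      exact (ENNReal.ofReal_sub _ (pow_nonneg (hρ j (hS hj)).1 _)).symm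
    rw [hconv]
    apply ENNReal.ofReal_le_ofReal
    have h0 : 0 ≤ ∏ j ∈ S, (ρ j ^ w j - ρ j ^ (w j + 1)) := Finset.prod_nonneg hSfac
    exact le_mul_of_one_le_right h0 (one_le_pow₀ hxinv)
  | @insert j₀ T' hj₀T' IH =>
    intro S hdisj hS hT w m
    have hj₀S : j₀ ∉ S := fun h =>
      (Finset.disjoint_right.1 hdisj (Finset.mem_insert_self j₀ T')) h
    have hj₀Icc : j₀ ∈ Icc 2 n := hT (Finset.mem_insert_self j₀ T')
    have hT'sub : T' ⊆ Icc 2 n := fun j hj => hT (Finset.mem_insert_of_mem hj)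
    have hρ0 := (hρ j₀ hj₀Icc).1
    have hρ1 := (hρ j₀ hj₀Icc).2
    have hdisj' : Disjoint (insert j₀ S) T' := by
      rw [Finset.disjoint_insert_left]
      exact ⟨hj₀T', Finset.disjoint_of_subset_right (Finset.subset_insert _ _) hdisj⟩
    have hS' : insert j₀ S ⊆ Icc 2 n := Finset.insert_subset hj₀Icc hS
    set E : ℕ → Set Ω := fun k =>
      {ω | (∀ j ∈ insert j₀ S, Z j ω = ((Function.update w j₀ k j : ℕ) : ℝ) / Real.sqrt n) ∧
        ∑ j ∈ T', Z j ω ≤ ((m - k : ℕ) : ℝ) / Real.sqrt n} with hE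
    have hcover : {ω | (∀ j ∈ S, Z j ω = (w j : ℝ) / Real.sqrt n) ∧
        ∑ j ∈ insert j₀ T', Z j ω ≤ (m : ℝ) / Real.sqrt n} ⊆ ⋃ k ∈ range (m + 1), E k := by
      rintro ω ⟨h1, h2⟩
      obtain ⟨m₀, hm₀⟩ := hlat j₀ ω
      have hj₀sum : Z j₀ ω ≤ ∑ j ∈ insert j₀ T', Z j ω :=
        Finset.single_le_sum (fun j _ => hZ0 j ω) (Finset.mem_insert_self _ _)
      have hm₀m : m₀ ≤ m := by
        have hle : (m₀ : ℝ) / Real.sqrt n ≤ (m : ℝ) / Real.sqrt n := by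
          rw [← hm₀]
          exact hj₀sum.trans h2
        have := (div_le_div_iff_of_pos_right hsq).1 hle
        exact_mod_cast this
      refine Set.mem_biUnion (Finset.mem_range.2 (Nat.lt_succ_of_le hm₀m)) ?_
      refine ⟨fun j hj => ?_, ?_⟩
      · rcases Finset.mem_insert.1 hj with rfl | hj'
        · rw [Function.update_self]
          exact hm₀
        · rw [Function.update_of_ne (by rintro rfl; exact hj₀S hj') _ _]
          exact h1 j hj'
      · have hsum : ∑ j ∈ T', Z j ω = (∑ j ∈ insert j₀ T', Z j ω) - Z j₀ ω := by
          rw [Finset.sum_insert hj₀T']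
          ring
        rw [hsum, hm₀, Nat.cast_sub hm₀m, sub_div]
        have := h2
        linarith
    refine le_trans (measure_mono hcover) (le_trans (measure_biUnion_finset_le _ _) ?_)
    set PS := ∏ j ∈ S, (ρ j ^ w j - ρ j ^ (w j + 1)) with hPS
    set QT := ∏ j ∈ T', ((1 - ρ j) / (1 - x * ρ j)) with hQT
    have hPSnn : 0 ≤ PS := Finset.prod_nonneg fun j hj => by
      have h := hρ j (hS hj)
      exact sub_nonneg.2 (pow_le_pow_of_le_one h.1 h.2 (Nat.le_succ _))
    have hQTnn : 0 ≤ QT := Finset.prod_nonneg fun j hj => hqnn j (hT'sub hj)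
    have hfk : ∀ k, 0 ≤ (ρ j₀ ^ k - ρ j₀ ^ (k + 1)) :=
      fun k => sub_nonneg.2 (pow_le_pow_of_le_one hρ0 hρ1 (Nat.le_succ _))
    have hIH : ∀ k ∈ range (m + 1), μ (E k) ≤
        ENNReal.ofReal (((ρ j₀ ^ k - ρ j₀ ^ (k + 1)) * PS) * (x⁻¹) ^ (m - k) * QT) := by
      intro k _
      have h := IH (insert j₀ S) hdisj' hS' hT'sub (Function.update w j₀ k) (m - k)
      have hprod : ∏ j ∈ insert j₀ S,
          (ρ j ^ (Function.update w j₀ k j) - ρ j ^ (Function.update w j₀ k j + 1))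
          = (ρ j₀ ^ k - ρ j₀ ^ (k + 1)) * PS := by
        rw [Finset.prod_insert hj₀S, Function.update_self]
        congr 1
        exact Finset.prod_congr rfl fun j hj => by
          rw [Function.update_of_ne (by rintro rfl; exact hj₀S hj) _ _]
      rw [hprod] at h
      exact h
    calc ∑ k ∈ range (m + 1), μ (E k)
        ≤ ∑ k ∈ range (m + 1),
            ENNReal.ofReal (((ρ j₀ ^ k - ρ j₀ ^ (k + 1)) * PS) * (x⁻¹) ^ (m - k) * QT) :=
          Finset.sum_le_sum hIH
      _ = ENNReal.ofReal (∑ k ∈ range (m + 1),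
            ((ρ j₀ ^ k - ρ j₀ ^ (k + 1)) * PS) * (x⁻¹) ^ (m - k) * QT) := by
          rw [ENNReal.ofReal_sum_of_nonneg]
          intro k _
          have := hfk k
          positivity
      _ ≤ ENNReal.ofReal (PS * (x⁻¹) ^ m * ∏ j ∈ insert j₀ T', ((1 - ρ j) / (1 - x * ρ j))) := by
          apply ENNReal.ofReal_le_ofReal
          rw [Finset.prod_insert hj₀T']
          have hstep : ∀ k ∈ range (m + 1),
              ((ρ j₀ ^ k - ρ j₀ ^ (k + 1)) * PS) * (x⁻¹) ^ (m - k) * QT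
              = (PS * (x⁻¹) ^ m * QT) * ((x * ρ j₀) ^ k * (1 - ρ j₀)) := by
            intro k hk
            have hk' : k ≤ m := Nat.lt_succ_iff.1 (Finset.mem_range.1 hk)
            have h1 : x ^ m = x ^ (m - k) * x ^ k := by
              rw [← pow_add]
              congr 1
              omega
            have hxmk : x⁻¹ ^ (m - k) = x⁻¹ ^ m * x ^ k := by
              rw [inv_pow, inv_pow, h1, mul_inv, mul_assoc,
                inv_mul_cancel₀ (pow_ne_zero k (ne_of_gt hx0)), mul_one]
            rw [hxmk, pow_succ, mul_pow]
            ring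
          rw [Finset.sum_congr rfl hstep, ← Finset.mul_sum]
          have hxρ0 : 0 ≤ x * ρ j₀ := mul_nonneg hx0.le hρ0
          have hxρ1 : x * ρ j₀ < 1 := by nlinarith
          have hsumle : ∑ k ∈ range (m + 1), ((x * ρ j₀) ^ k * (1 - ρ j₀))
              ≤ (1 - x * ρ j₀)⁻¹ * (1 - ρ j₀) := by
            rw [← Finset.sum_mul]
            apply mul_le_mul_of_nonneg_right (aux_geom _ hxρ0 hxρ1 _) (by linarith)
          have hCnn : 0 ≤ PS * (x⁻¹) ^ m * QT := by positivity
          calc (PS * (x⁻¹) ^ m * QT) * ∑ k ∈ range (m + 1), ((x * ρ j₀) ^ k * (1 - ρ j₀))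
              ≤ (PS * (x⁻¹) ^ m * QT) * ((1 - x * ρ j₀)⁻¹ * (1 - ρ j₀)) :=
                mul_le_mul_of_nonneg_left hsumle hCnn
            _ = PS * (x⁻¹) ^ m * ((1 - ρ j₀) / (1 - x * ρ j₀) * QT) := by
                rw [div_eq_mul_inv]
                ring

lemma aux_master (μ : Measure Ω) [IsProbabilityMeasure μ]
    (Z : ℕ → Ω → ℝ) (ρ : ℕ → ℝ) (n : ℕ) (hn : 1 ≤ n)
    (hm : ∀ j, Measurable (Z j))
    (hlat : ∀ j ω, ∃ m : ℕ, Z j ω = (m : ℝ) / Real.sqrt n)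
    (htail : ∀ m : ℕ → ℕ,
      μ {ω | ∀ j ∈ Icc 1 n, (m j : ℝ) / Real.sqrt n ≤ Z j ω}
        = ∏ j ∈ Icc 1 n, ENNReal.ofReal (ρ j ^ m j))
    (hρ : ∀ j ∈ Icc 2 n, 0 ≤ ρ j ∧ ρ j ≤ 1)
    (c δ q θ : ℝ) (hc : 0 < c) (hδ : 0 < δ) (hq0 : 0 < q) (hqθ : q < θ) (hθ1 : θ < 1)
    (hqq : ∀ j ∈ Icc 2 n,
      (1 - ρ j) / (1 - Real.exp (-(c / Real.sqrt n)) * ρ j) ≤ q)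
    (N : ℕ) (hN : 1 ≤ N) :
    μ {ω | δ < ∑ i ∈ Icc N n, Real.exp (-(c * ∑ j ∈ Icc 1 i, Z j ω))}
      ≤ ENNReal.ofReal ((δ * (1 - θ))⁻¹ * q ^ (N - 1) * (1 - q / θ)⁻¹) := by
  have hθ0 : 0 < θ := hq0.trans hqθ
  have hsq : 0 < Real.sqrt n := Real.sqrt_pos.2 (by exact_mod_cast hn)
  have hZ0 : ∀ j ω, 0 ≤ Z j ω := by
    intro j ω
    obtain ⟨m, hm'⟩ := hlat j ω
    rw [hm']
    positivity
  set x := Real.exp (-(c / Real.sqrt n)) with hxdef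
  have hx0 : 0 < x := Real.exp_pos _
  have hx1 : x < 1 := by
    rw [hxdef]
    apply Real.exp_lt_one_iff.2
    rw [neg_lt, neg_zero]
    positivity
  set z : ℕ → ℝ := fun i => δ * (1 - θ) * θ ^ (i - N) with hzdef
  have hz0 : ∀ i, 0 < z i := by
    intro i
    have : 0 < 1 - θ := by linarith
    positivity
  set t : ℕ → ℝ := fun i => -Real.log (z i) / c with htdef
  have hexp : ∀ i, Real.exp (-(c * t i)) = z i := by
    intro i
    rw [htdef]
    have harg : -(c * (-Real.log (z i) / c)) = Real.log (z i) := by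
      field_simp
    rw [harg, Real.exp_log (hz0 i)]
  have hexp' : ∀ i, Real.exp (c * t i) = (z i)⁻¹ := by
    intro i
    rw [← hexp i, ← Real.exp_neg, neg_neg]
  -- geometric sums
  have hgeomθ : ∑ i ∈ Icc N n, θ ^ (i - N) ≤ (1 - θ)⁻¹ := by
    rw [← Finset.Ico_add_one_right_eq_Icc, Finset.sum_Ico_eq_sum_range]
    calc ∑ k ∈ range (n + 1 - N), θ ^ (N + k - N)
        = ∑ k ∈ range (n + 1 - N), θ ^ k := by
          refine Finset.sum_congr rfl fun k _ => ?_
          congr 1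
          omega
      _ ≤ (1 - θ)⁻¹ := aux_geom θ hθ0.le hθ1 _
  -- step 1 : cover
  have hcover : {ω | δ < ∑ i ∈ Icc N n, Real.exp (-(c * ∑ j ∈ Icc 1 i, Z j ω))} ⊆
      ⋃ i ∈ Icc N n, {ω | ∑ j ∈ Icc 1 i, Z j ω < t i} := by
    intro ω hω
    by_contra hno
    simp only [Set.mem_iUnion, Set.mem_setOf_eq, not_exists, not_lt] at hno
    have hle : ∑ i ∈ Icc N n, Real.exp (-(c * ∑ j ∈ Icc 1 i, Z j ω)) ≤ ∑ i ∈ Icc N n, z i := by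
      refine Finset.sum_le_sum fun i hi => ?_
      rw [← hexp i]
      apply Real.exp_le_exp.2
      have := hno i hi
      nlinarith
    have hzsum : ∑ i ∈ Icc N n, z i ≤ δ := by
      have h1 : ∑ i ∈ Icc N n, z i = δ * (1 - θ) * ∑ i ∈ Icc N n, θ ^ (i - N) := by
        rw [Finset.mul_sum]
      rw [h1]
      have h2 : δ * (1 - θ) * ∑ i ∈ Icc N n, θ ^ (i - N) ≤ δ * (1 - θ) * (1 - θ)⁻¹ := by
        apply mul_le_mul_of_nonneg_left hgeomθ
        nlinarith
      calc δ * (1 - θ) * ∑ i ∈ Icc N n, θ ^ (i - N) ≤ δ * (1 - θ) * (1 - θ)⁻¹ := h2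
        _ = δ := by
          rw [mul_assoc, mul_inv_cancel₀ (by linarith : (1:ℝ) - θ ≠ 0), mul_one]
    have hδlt : δ < δ := lt_of_lt_of_le hω (hle.trans hzsum)
    exact lt_irrefl _ hδlt
  refine le_trans (measure_mono hcover) (le_trans (measure_biUnion_finset_le _ _) ?_)
  -- per i bound
  have hper : ∀ i ∈ Icc N n, μ {ω | ∑ j ∈ Icc 1 i, Z j ω < t i}
      ≤ ENNReal.ofReal ((z i)⁻¹ * q ^ (i - 1)) := by
    intro i hi
    obtain ⟨hNi, hin⟩ := Finset.mem_Icc.1 hi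
    have hbnn : 0 ≤ (z i)⁻¹ * q ^ (i - 1) := by
      have := hz0 i
      positivity
    rcases le_or_gt (t i) 0 with hti | hti
    · have hempty : {ω | ∑ j ∈ Icc 1 i, Z j ω < t i} = ∅ := by
        ext ω
        simp only [Set.mem_setOf_eq, Set.mem_empty_iff_false, iff_false, not_lt]
        exact le_trans hti (Finset.sum_nonneg fun j _ => hZ0 j ω)
      rw [hempty]
      simp
    · set m := Nat.floor (t i * Real.sqrt n) with hmdef
      have hsub : {ω | ∑ j ∈ Icc 1 i, Z j ω < t i} ⊆
          {ω | (∀ j ∈ (∅ : Finset ℕ), Z j ω = (((fun _ => 0) j : ℕ) : ℝ) / Real.sqrt n) ∧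
            ∑ j ∈ Icc 2 i, Z j ω ≤ (m : ℝ) / Real.sqrt n} := by
        intro ω hω
        refine ⟨by simp, ?_⟩
        have hsum2 : ∑ j ∈ Icc 2 i, Z j ω ≤ ∑ j ∈ Icc 1 i, Z j ω :=
          Finset.sum_le_sum_of_subset_of_nonneg (Icc_subset_Icc_left (by norm_num))
            (fun j _ _ => hZ0 j ω)
        choose M hM using fun j => hlat j ω
        have hrepr : ∑ j ∈ Icc 2 i, Z j ω = ((∑ j ∈ Icc 2 i, M j : ℕ) : ℝ) / Real.sqrt n := by
          push_cast
          rw [Finset.sum_div]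
          exact Finset.sum_congr rfl fun j _ => hM j
        have hK : ((∑ j ∈ Icc 2 i, M j : ℕ) : ℝ) < t i * Real.sqrt n := by
          have h := lt_of_le_of_lt hsum2 hω
          rw [hrepr] at h
          exact (div_lt_iff₀ hsq).1 h
        have hKm : (∑ j ∈ Icc 2 i, M j) ≤ m := Nat.le_floor hK.le
        rw [hrepr]
        exact (div_le_div_iff_of_pos_right hsq).2 (by exact_mod_cast hKm)
      refine le_trans (measure_mono hsub) (le_trans (aux_D μ Z ρ n hn hm hlat htail hρ
        x hx0 hx1 (Icc 2 i) ∅ (Finset.disjoint_empty_left _) (Finset.empty_subset _)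
        (Icc_subset_Icc_right hin) (fun _ => 0) m) ?_)
      apply ENNReal.ofReal_le_ofReal
      rw [Finset.prod_empty, one_mul]
      have hxm : (x⁻¹ : ℝ) ^ m ≤ (z i)⁻¹ := by
        have hxinv : x⁻¹ = Real.exp (c / Real.sqrt n) := by
          rw [hxdef, ← Real.exp_neg, neg_neg]
        rw [hxinv, ← Real.exp_nat_mul, ← hexp' i]
        apply Real.exp_le_exp.2
        have hmle : (m : ℝ) ≤ t i * Real.sqrt n := Nat.floor_le (by positivity)
        calc (m : ℝ) * (c / Real.sqrt n)
            ≤ (t i * Real.sqrt n) * (c / Real.sqrt n) :=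
              mul_le_mul_of_nonneg_right hmle (by positivity)
          _ = c * t i := by
              field_simp
      have hsubicc : Icc 2 i ⊆ Icc 2 n := Icc_subset_Icc_right hin
      have hprodnn : 0 ≤ ∏ j ∈ Icc 2 i, ((1 - ρ j) / (1 - x * ρ j)) := by
        apply Finset.prod_nonneg
        intro j hj
        have h := hρ j (hsubicc hj)
        have hd : 0 < 1 - x * ρ j := by nlinarith
        exact div_nonneg (by linarith) hd.le
      have hprodq : ∏ j ∈ Icc 2 i, ((1 - ρ j) / (1 - x * ρ j)) ≤ q ^ (i - 1) := by
        calc ∏ j ∈ Icc 2 i, ((1 - ρ j) / (1 - x * ρ j)) ≤ ∏ j ∈ Icc 2 i, q := by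
              apply Finset.prod_le_prod
              · intro j hj
                have h := hρ j (hsubicc hj)
                have hd : 0 < 1 - x * ρ j := by nlinarith
                exact div_nonneg (by linarith) hd.le
              · intro j hj
                exact hqq j (hsubicc hj)
          _ = q ^ (i - 1) := by
              rw [Finset.prod_const, Nat.card_Icc, show i + 1 - 2 = i - 1 from by omega]
      exact mul_le_mul hxm hprodq hprodnn (inv_nonneg.2 (hz0 i).le)
  -- sum up
  have hfinal : ∑ i ∈ Icc N n, (z i)⁻¹ * q ^ (i - 1)
      ≤ (δ * (1 - θ))⁻¹ * q ^ (N - 1) * (1 - q / θ)⁻¹ := by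
    have hterm : ∀ i ∈ Icc N n, (z i)⁻¹ * q ^ (i - 1)
        = (δ * (1 - θ))⁻¹ * q ^ (N - 1) * (q / θ) ^ (i - N) := by
      intro i hi
      obtain ⟨hNi, hin⟩ := Finset.mem_Icc.1 hi
      have h1 : (z i)⁻¹ = (δ * (1 - θ))⁻¹ * (θ ^ (i - N))⁻¹ := by
        rw [hzdef]
        rw [mul_inv]
      have h2 : q ^ (i - 1) = q ^ (N - 1) * q ^ (i - N) := by
        rw [← pow_add]
        congr 1
        omega
      rw [h1, h2, div_pow, div_eq_mul_inv]
      ring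
    rw [Finset.sum_congr rfl hterm, ← Finset.mul_sum]
    have hr0 : 0 ≤ q / θ := by positivity
    have hr1 : q / θ < 1 := (div_lt_one hθ0).2 hqθ
    have hgeo : ∑ i ∈ Icc N n, (q / θ) ^ (i - N) ≤ (1 - q / θ)⁻¹ := by
      rw [← Finset.Ico_add_one_right_eq_Icc, Finset.sum_Ico_eq_sum_range]
      calc ∑ k ∈ range (n + 1 - N), (q / θ) ^ (N + k - N)
          = ∑ k ∈ range (n + 1 - N), (q / θ) ^ k := by
            refine Finset.sum_congr rfl fun k _ => ?_
            congr 1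
            omega
        _ ≤ (1 - q / θ)⁻¹ := aux_geom _ hr0 hr1 _
    apply mul_le_mul_of_nonneg_left hgeo
    have h1θ : 0 < 1 - θ := by linarith
    positivity
  calc ∑ i ∈ Icc N n, μ {ω | ∑ j ∈ Icc 1 i, Z j ω < t i}
      ≤ ∑ i ∈ Icc N n, ENNReal.ofReal ((z i)⁻¹ * q ^ (i - 1)) := Finset.sum_le_sum hper
    _ = ENNReal.ofReal (∑ i ∈ Icc N n, (z i)⁻¹ * q ^ (i - 1)) := by
        rw [ENNReal.ofReal_sum_of_nonneg]
        intro i _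
        have := hz0 i
        positivity
    _ ≤ ENNReal.ofReal ((δ * (1 - θ))⁻¹ * q ^ (N - 1) * (1 - q / θ)⁻¹) :=
        ENNReal.ofReal_le_ofReal hfinal

end Aux

set_option maxHeartbeats 1000000 in
lemma aux_qbound (a c : ℝ) (ha : 0 < a) (hc : 0 < c) (n : ℕ) (hn1 : 1 ≤ n)
    (hns : (2 * a * (1 + c)) ^ 2 ≤ (n : ℝ)) :
    ∀ u : ℝ, 0 ≤ u → u ≤ a / Real.sqrt n →
      u / ((1 - Real.exp (-(c / Real.sqrt n))) + Real.exp (-(c / Real.sqrt n)) * u)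
        ≤ (2 * a + c) / (2 * a + 2 * c) := by
  intro u hu0 hu1
  set s := Real.sqrt n with hsdef
  have hs0 : 0 < s := Real.sqrt_pos.2 (by exact_mod_cast hn1)
  have hs1 : 1 ≤ s := Real.one_le_sqrt.2 (by exact_mod_cast hn1)
  have hs2 : 2 * a * (1 + c) ≤ s := by
    rw [hsdef]
    exact (Real.le_sqrt (by positivity) (by positivity)).2 hns
  set q : ℝ := (2 * a + c) / (2 * a + 2 * c) with hqdef
  have hq0 : 0 < q := by positivity
  have hq1 : q < 1 := by
    rw [hqdef, div_lt_one (by linarith)]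
    linarith
  set x := Real.exp (-(c / s)) with hxdef
  have hx0 : 0 < x := Real.exp_pos _
  have hxlt1 : x < 1 := by
    rw [hxdef]
    apply Real.exp_lt_one_iff.2
    rw [neg_lt, neg_zero]
    positivity
  have hx_ge : 1 - c / s ≤ x := by
    have := Real.add_one_le_exp (-(c / s))
    rw [hxdef]
    linarith
  have hx_le : x ≤ s / (s + c) := by
    have h1 : 1 + c / s ≤ Real.exp (c / s) := by
      have := Real.add_one_le_exp (c / s)
      linarith
    have h2 : x = (Real.exp (c / s))⁻¹ := by
      rw [hxdef, ← Real.exp_neg]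
    have h3 : (Real.exp (c / s))⁻¹ ≤ (1 + c / s)⁻¹ :=
      inv_anti₀ (by positivity) h1
    have h4 : (1 + c / s)⁻¹ = s / (s + c) := by
      rw [show (1 : ℝ) + c / s = (s + c) / s by field_simp, inv_div]
    calc x = (Real.exp (c / s))⁻¹ := h2
      _ ≤ (1 + c / s)⁻¹ := h3
      _ = s / (s + c) := h4
  have hxc : 1 - x ≤ c / s := by linarith
  have hsc0 : (0:ℝ) < s + c := by linarith
  -- the central inequality
  have hqe : q * c - a * (1 - q) = c / 2 := by
    rw [hqdef]
    field_simp
    ring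
  have hcore : a * (1 - q + q * (c / s)) ≤ q * (s * c / (s + c)) := by
    have hlhs : a * (1 - q + q * (c / s)) = a * ((1 - q) * s + q * c) / s := by
      field_simp
    have hrhs : q * (s * c / (s + c)) = q * s * c / (s + c) := by ring
    rw [hlhs, hrhs, div_le_div_iff₀ hs0 hsc0]
    have h8 : (q * c - a * (1 - q)) * s ^ 2 = (c / 2) * s ^ 2 := by rw [hqe]
    have h6 : 0 ≤ (c / 2) * s * (s - 2 * a * (1 + c)) := by
      apply mul_nonneg (mul_nonneg (by positivity) hs0.le)
      linarith
    have h7 : 0 ≤ a * c ^ 2 * (s - q) := by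
      apply mul_nonneg (by positivity)
      linarith
    nlinarith [h6, h7, h8]
  have hxq1 : 0 ≤ 1 - q * x := by nlinarith
  have hxq2 : 1 - q * x ≤ 1 - q + q * (c / s) := by nlinarith
  have hsx : s * c / (s + c) ≤ s * (1 - x) := by
    have h5 : c / (s + c) ≤ 1 - x := by
      have he : c / (s + c) = 1 - s / (s + c) := by field_simp; ring
      rw [he]
      linarith
    calc s * c / (s + c) = s * (c / (s + c)) := by ring
      _ ≤ s * (1 - x) := mul_le_mul_of_nonneg_left h5 hs0.le
  have key : a * (1 - q * x) ≤ q * (s * (1 - x)) := by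
    calc a * (1 - q * x) ≤ a * (1 - q + q * (c / s)) :=
          mul_le_mul_of_nonneg_left hxq2 ha.le
      _ ≤ q * (s * c / (s + c)) := hcore
      _ ≤ q * (s * (1 - x)) := mul_le_mul_of_nonneg_left hsx hq0.le
  have hden : 0 < (1 - x) + x * u := by nlinarith
  rw [div_le_iff₀ hden]
  have hu2 : u * (1 - q * x) ≤ (a / s) * (1 - q * x) :=
    mul_le_mul_of_nonneg_right hu1 hxq1
  have hk2 : (a / s) * (1 - q * x) ≤ q * (1 - x) := by
    rw [div_mul_eq_mul_div, div_le_iff₀ hs0]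
    nlinarith [key]
  nlinarith [hu2, hk2]

/-- Tightness of exponential moments of the stationary positions: with
`Ẑ_j^n` independent scaled geometric gaps and `X̂_i^n = Σ_{j=1}^i Ẑ_j^n`,
`limsup_N limsup_n P(Σ_{i=N}^n e^{−c X̂_i^n} > δ) = 0`. -/
theorem stationary_initial_condition_tightness
    (a b : ℝ) (hb : 0 < b) (hab : b < a) (c δ : ℝ) (hc : 0 < c) (hδ : 0 < δ)
    {Ω : Type*} [MeasurableSpace Ω] (μ : Measure Ω) [IsProbabilityMeasure μ]
    (Zhat : ℕ → ℕ → Ω → ℝ)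
    (hmeas : ∀ n j, Measurable (Zhat n j))
    (hlattice : ∀ n j ω, ∃ m : ℕ, Zhat n j ω = (m : ℝ) / Real.sqrt n)
    -- `√n Ẑ_1^n, …, √n Ẑ_n^n` are independent geometric random variables on
    -- `ℕ₀` with success probabilities `1 − ρ_j^{(n)}`:
    (htail : ∀ n, 1 ≤ n → ∀ m : ℕ → ℕ,
      μ {ω | ∀ j ∈ Icc 1 n, (m j : ℝ) / Real.sqrt n ≤ Zhat n j ω}
        = ∏ j ∈ Icc 1 n, ENNReal.ofReal (jacksonRho a b n j ^ m j)) :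
    limsup (fun N : ℕ =>
      limsup (fun n : ℕ =>
        μ {ω | δ < ∑ i ∈ Icc N n,
            Real.exp (-(c * ∑ j ∈ Icc 1 i, Zhat n j ω))}) atTop) atTop = 0 := by
  have ha : 0 < a := hb.trans hab
  set q : ℝ := (2 * a + c) / (2 * a + 2 * c) with hqdef
  have hq0 : 0 < q := by positivity
  have hq1 : q < 1 := by
    rw [hqdef, div_lt_one (by linarith)]
    linarith
  set θ : ℝ := (1 + q) / 2 with hθdef
  have hqθ : q < θ := by
    rw [hθdef]
    linarith
  have hθ1 : θ < 1 := by
    rw [hθdef]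
    linarith
  have hθ0 : 0 < θ := hq0.trans hqθ
  have key : ∀ N : ℕ, 1 ≤ N →
      limsup (fun n : ℕ => μ {ω | δ < ∑ i ∈ Icc N n,
        Real.exp (-(c * ∑ j ∈ Icc 1 i, Zhat n j ω))}) atTop
      ≤ ENNReal.ofReal ((δ * (1 - θ))⁻¹ * q ^ (N - 1) * (1 - q / θ)⁻¹) := by
    intro N hN
    refine limsup_le_of_le (by isBoundedDefault) ?_
    have h1 : ∀ᶠ n : ℕ in atTop, 1 ≤ n := eventually_ge_atTop 1
    have h2 : ∀ᶠ n : ℕ in atTop, a ≤ (n : ℝ) := by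
      filter_upwards [eventually_ge_atTop ⌈a⌉₊] with n hn
      exact le_trans (Nat.le_ceil a) (by exact_mod_cast hn)
    have h3 : ∀ᶠ n : ℕ in atTop, (2 * a * (1 + c)) ^ 2 ≤ (n : ℝ) := by
      filter_upwards [eventually_ge_atTop ⌈(2 * a * (1 + c)) ^ 2⌉₊] with n hn
      exact le_trans (Nat.le_ceil _) (by exact_mod_cast hn)
    filter_upwards [h1, h2, h3] with n hn1 hna hns
    have hnpos : (0 : ℝ) < n := by exact_mod_cast hn1
    have hs0 : 0 < Real.sqrt n := Real.sqrt_pos.2 hnpos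
    have hs1 : 1 ≤ Real.sqrt n := Real.one_le_sqrt.2 (by exact_mod_cast hn1)
    have h32 : ((n : ℝ)) ^ ((3 : ℝ) / 2) = (n : ℝ) * Real.sqrt n := by
      rw [show ((3 : ℝ) / 2) = 1 + 1 / 2 by norm_num, Real.rpow_add hnpos, Real.rpow_one,
        ← Real.sqrt_eq_rpow]
    set y : ℝ := a / ((n : ℝ) * Real.sqrt n) with hydef
    have hy0 : 0 ≤ y := by positivity
    have hy1 : y ≤ 1 := by
      rw [hydef, div_le_one (by positivity)]
      calc a ≤ (n : ℝ) := hna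
        _ ≤ (n : ℝ) * Real.sqrt n := le_mul_of_one_le_right hnpos.le hs1
    have hρval : ∀ j ∈ Icc 2 n, jacksonRho a b n j = (1 - y) ^ (n - j + 1) := by
      intro j hj
      obtain ⟨hj2, hjn⟩ := Finset.mem_Icc.1 hj
      rw [jacksonRho, if_neg (by omega), h32, hydef]
    have hρn : ∀ j ∈ Icc 2 n, 0 ≤ jacksonRho a b n j ∧ jacksonRho a b n j ≤ 1 := by
      intro j hj
      rw [hρval j hj]
      exact ⟨pow_nonneg (by linarith) _, pow_le_one₀ (by linarith) (by linarith)⟩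
    have h1ρ : ∀ j ∈ Icc 2 n, 1 - jacksonRho a b n j ≤ a / Real.sqrt n := by
      intro j hj
      obtain ⟨hj2, hjn⟩ := Finset.mem_Icc.1 hj
      rw [hρval j hj]
      have hK : ((n - j + 1 : ℕ) : ℝ) ≤ (n : ℝ) := by
        have h : (n - j + 1 : ℕ) ≤ n := by omega
        exact_mod_cast h
      have hber : 1 + ((n - j + 1 : ℕ) : ℝ) * (-y) ≤ (1 + (-y)) ^ (n - j + 1) :=
        one_add_mul_le_pow (by linarith) _
      have hKy : ((n - j + 1 : ℕ) : ℝ) * y ≤ (n : ℝ) * y :=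
        mul_le_mul_of_nonneg_right hK hy0
      have hny : (n : ℝ) * y = a / Real.sqrt n := by
        rw [hydef, eq_div_iff (ne_of_gt hs0)]
        field_simp
      have hber' : 1 - ((n - j + 1 : ℕ) : ℝ) * y ≤ (1 - y) ^ (n - j + 1) := by
        simpa [sub_eq_add_neg, mul_neg] using hber
      linarith [hKy, hny, hber']
    have hqq : ∀ j ∈ Icc 2 n,
        (1 - jacksonRho a b n j) /
          (1 - Real.exp (-(c / Real.sqrt n)) * jacksonRho a b n j) ≤ q := by
      intro j hj
      have h := aux_qbound a c ha hc n hn1 hns (1 - jacksonRho a b n j)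
        (by linarith [(hρn j hj).2]) (h1ρ j hj)
      rw [hqdef]
      convert h using 2
      ring
    exact aux_master μ (Zhat n) (jacksonRho a b n) n hn1 (hmeas n) (hlattice n)
      (htail n hn1) hρn c δ q θ hc hδ hq0 hqθ hθ1 hqq N hN
  have htend : Tendsto (fun N : ℕ =>
      ENNReal.ofReal ((δ * (1 - θ))⁻¹ * q ^ (N - 1) * (1 - q / θ)⁻¹)) atTop (𝓝 0) := by
    have hreal : Tendsto (fun N : ℕ => (δ * (1 - θ))⁻¹ * q ^ (N - 1) * (1 - q / θ)⁻¹)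
        atTop (𝓝 0) := by
      have hp : Tendsto (fun k : ℕ => q ^ k) atTop (𝓝 0) :=
        tendsto_pow_atTop_nhds_zero_of_lt_one hq0.le hq1
      have hp2 : Tendsto (fun N : ℕ => q ^ (N - 1)) atTop (𝓝 0) :=
        hp.comp (tendsto_sub_atTop_nat 1)
      have := (hp2.const_mul ((δ * (1 - θ))⁻¹)).mul_const ((1 - q / θ)⁻¹)
      simpa using this
    have h0 := ENNReal.tendsto_ofReal hreal
    simpa using h0
  refine le_antisymm ?_ zero_le
  calc limsup (fun N : ℕ =>
      limsup (fun n : ℕ =>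
        μ {ω | δ < ∑ i ∈ Icc N n,
            Real.exp (-(c * ∑ j ∈ Icc 1 i, Zhat n j ω))}) atTop) atTop
      ≤ limsup (fun N : ℕ =>
          ENNReal.ofReal ((δ * (1 - θ))⁻¹ * q ^ (N - 1) * (1 - q / θ)⁻¹)) atTop := by
        refine limsup_le_limsup ?_ (by isBoundedDefault) (by isBoundedDefault)
        filter_upwards [eventually_ge_atTop 1] with N hN
        exact key N hN
    _ = 0 := htend.limsup_eq
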